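/- Under Assumption A(ρ) with X_0 = 0 almost surely and ξ_0 having a symmetric distribution, for M > 0 define the truncated innovations ξ_{t,M} = ξ_t · 1_{{|ξ_t| ≤ M}} and the truncated process X_{0,M}^{(n)} = 0, X_{t,M}^{(n)} = a_t(t/(nT)) X_{t−1,M}^{(n)} + ξ_{t,M} for 1 ≤ t ≤ nT, and set h(M) = E[ξ_0² · 1_{{|ξ_0| > M}}]. Then there exist constants C > 0 and M₀ > 0 such that for every M ≥ M₀, every n ≥ 1 and every 0 ≤ t ≤ nT, one has E[(X_t^{(n)} − X_{t,M}^{(n)})²] ≤ (2/(1−α²)) · (2α·√(2c)·√(h(M)) + h(M)) with c = sup_{n, 0≤t≤nT} max(E[(X_t^{(n)})²], E[(X_{t,M}^{(n)})²]) < ∞, and consequently E[|(X_t^{(n)})² − (X_{t,M}^{(n)})²|] ≤ C · h(M)^{1/4}. -/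

import Mathlib

open MeasureTheory ProbabilityTheory Filter Set
open scoped ProbabilityTheory

noncomputable section

/-- The largest integer strictly smaller than a positive real `ρ`. -/
def lint (ρ : ℝ) : ℕ := ⌈ρ⌉₊ - 1

/-- A function is of class `C^ρ` on `[0,1]`: it is `lint ρ` times continuously
differentiable there and its `lint ρ`-th derivative is `(ρ - lint ρ)`-Hölder. -/
def CHolder (ρ : ℝ) (f : ℝ → ℝ) : Prop :=
  ContDiffOn ℝ (lint ρ) f (Set.Icc 0 1) ∧
  ∃ C : ℝ, 0 ≤ C ∧ ∀ u ∈ Set.Icc (0:ℝ) 1, ∀ v ∈ Set.Icc (0:ℝ) 1,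
    |iteratedDerivWithin (lint ρ) f (Set.Icc 0 1) u -
      iteratedDerivWithin (lint ρ) f (Set.Icc 0 1) v| ≤ C * |u - v| ^ (ρ - (lint ρ : ℝ))

lemma cs2 {Ω : Type*} [MeasureSpace Ω] {f g : Ω → ℝ}
    (hf : MemLp f 2 ℙ) (hg : MemLp g 2 ℙ) :
    ∫ ω, |f ω * g ω| ∂ℙ ≤
      Real.sqrt (∫ ω, f ω ^ 2 ∂ℙ) * Real.sqrt (∫ ω, g ω ^ 2 ∂ℙ) := by
  have hpq : (2:ℝ).HolderConjugate 2 := Real.HolderConjugate.two_two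
  have h2 : ENNReal.ofReal (2:ℝ) = 2 := by
    rw [ENNReal.ofReal_ofNat]
  have H := MeasureTheory.integral_mul_norm_le_Lp_mul_Lq (μ := (ℙ : Measure Ω)) hpq
      (h2 ▸ hf) (h2 ▸ hg)
  have e1 : ∀ (u : Ω → ℝ), (fun ω => ‖u ω‖ ^ (2:ℝ)) = fun ω => u ω ^ 2 := by
    intro u; funext ω
    rw [show (2:ℝ) = ((2:ℕ):ℝ) by norm_num, Real.rpow_natCast]
    simp [sq_abs, Real.norm_eq_abs]
  rw [e1 f, e1 g] at H
  calc ∫ ω, |f ω * g ω| ∂ℙ = ∫ ω, ‖f ω‖ * ‖g ω‖ ∂ℙ := by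
        congr 1; funext ω; rw [Real.norm_eq_abs, Real.norm_eq_abs, abs_mul]
    _ ≤ (∫ ω, f ω ^ 2 ∂ℙ) ^ ((1:ℝ)/2) * (∫ ω, g ω ^ 2 ∂ℙ) ^ ((1:ℝ)/2) := H
    _ = _ := by
        rw [← Real.sqrt_eq_rpow, ← Real.sqrt_eq_rpow]

lemma sq_int_add {Ω : Type*} [MeasureSpace Ω] {f g : Ω → ℝ}
    (hf : MemLp f 2 ℙ) (hg : MemLp g 2 ℙ) :
    ∫ ω, (f ω + g ω) ^ 2 ∂ℙ ≤
      (Real.sqrt (∫ ω, f ω ^ 2 ∂ℙ) + Real.sqrt (∫ ω, g ω ^ 2 ∂ℙ)) ^ 2 := by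
  have hfg : Integrable (fun ω => f ω * g ω) ℙ := by
    refine Integrable.mono' ((hf.integrable_sq.add hg.integrable_sq).div_const 2)
      (hf.1.mul hg.1) (Eventually.of_forall fun ω => ?_)
    simp only [Pi.add_apply]
    rw [Real.norm_eq_abs, abs_mul]
    nlinarith [sq_nonneg (|f ω| - |g ω|), sq_abs (f ω), sq_abs (g ω), abs_nonneg (f ω), abs_nonneg (g ω)]
  have habs : ∫ ω, f ω * g ω ∂ℙ ≤ ∫ ω, |f ω * g ω| ∂ℙ :=
    integral_mono hfg hfg.abs fun ω => le_abs_self _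
  have hA : (0:ℝ) ≤ ∫ ω, f ω ^ 2 ∂ℙ := integral_nonneg fun ω => sq_nonneg _
  have hB : (0:ℝ) ≤ ∫ ω, g ω ^ 2 ∂ℙ := integral_nonneg fun ω => sq_nonneg _
  have expand : ∫ ω, (f ω + g ω) ^ 2 ∂ℙ
      = (∫ ω, f ω ^ 2 ∂ℙ) + 2 * (∫ ω, f ω * g ω ∂ℙ) + ∫ ω, g ω ^ 2 ∂ℙ := by
    have e : (fun ω => (f ω + g ω) ^ 2)
        = fun ω => (f ω ^ 2 + 2 * (f ω * g ω)) + g ω ^ 2 := by funext ω; ring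
    have i1 : Integrable (fun ω => f ω ^ 2 + 2 * (f ω * g ω)) ℙ :=
      hf.integrable_sq.add (hfg.const_mul 2)
    have s1 : ∫ ω, ((f ω ^ 2 + 2 * (f ω * g ω)) + g ω ^ 2) ∂ℙ
        = (∫ ω, (f ω ^ 2 + 2 * (f ω * g ω)) ∂ℙ) + ∫ ω, g ω ^ 2 ∂ℙ :=
      integral_add i1 hg.integrable_sq
    have s2 : ∫ ω, (f ω ^ 2 + 2 * (f ω * g ω)) ∂ℙ
        = (∫ ω, f ω ^ 2 ∂ℙ) + ∫ ω, 2 * (f ω * g ω) ∂ℙ :=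
      integral_add hf.integrable_sq (hfg.const_mul 2)
    rw [e, s1, s2, MeasureTheory.integral_const_mul]
  have hcs := cs2 hf hg
  have hsqA : Real.sqrt (∫ ω, f ω ^ 2 ∂ℙ) ^ 2 = ∫ ω, f ω ^ 2 ∂ℙ := Real.sq_sqrt hA
  have hsqB : Real.sqrt (∫ ω, g ω ^ 2 ∂ℙ) ^ 2 = ∫ ω, g ω ^ 2 ∂ℙ := Real.sq_sqrt hB
  nlinarith [habs, hcs]

lemma key18 {Ω : Type*} [MeasureSpace Ω] {m : ℕ} {Y e : ℕ → Ω → ℝ} {b : ℕ → ℝ} {α K : ℝ}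
    (hα0 : 0 ≤ α) (hα1 : α < 1) (hK : 0 ≤ K)
    (h0 : Y 0 =ᵐ[ℙ] 0)
    (hb : ∀ t, 1 ≤ t → t ≤ m → |b t| ≤ α)
    (he : ∀ t, MemLp (e t) 2 ℙ)
    (heK : ∀ t, 1 ≤ t → t ≤ m → ∫ ω, e t ω ^ 2 ∂ℙ ≤ K ^ 2)
    (hrec : ∀ t, 1 ≤ t → t ≤ m → ∀ ω, Y t ω = b t * Y (t - 1) ω + e t ω) :
    ∀ t, t ≤ m → MemLp (Y t) 2 ℙ ∧ ∫ ω, Y t ω ^ 2 ∂ℙ ≤ (K / (1 - α)) ^ 2 := by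
  have h1α : (0:ℝ) < 1 - α := by linarith
  intro t
  induction t with
  | zero =>
    intro _
    refine ⟨MemLp.ae_eq h0.symm (MemLp.zero (ε := ℝ) (p := 2) (μ := (ℙ : Measure Ω))), ?_⟩
    have : ∫ ω, Y 0 ω ^ 2 ∂ℙ = ∫ (_ : Ω), (0:ℝ) ∂ℙ := by
      refine integral_congr_ae (h0.mono fun ω hω => ?_)
      simp only [Pi.zero_apply] at hω; simp [hω]
    rw [this]; simp; positivity
  | succ t ih =>
    intro ht
    have iht := ih (by omega)
    have hrw : Y (t + 1) = (fun ω => b (t + 1) * Y t ω) + fun ω => e (t + 1) ω := by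
      funext ω
      simpa [Nat.add_sub_cancel] using hrec (t + 1) (by omega) ht ω
    have hmem1 : MemLp (fun ω => b (t + 1) * Y t ω) 2 ℙ := iht.1.const_mul _
    have hmem : MemLp (Y (t + 1)) 2 ℙ := by rw [hrw]; exact hmem1.add (he (t + 1))
    refine ⟨hmem, ?_⟩
    have hI : ∫ ω, Y (t + 1) ω ^ 2 ∂ℙ
        = ∫ ω, (b (t + 1) * Y t ω + e (t + 1) ω) ^ 2 ∂ℙ := by
      congr 1; funext ω
      rw [hrec (t + 1) (by omega) ht ω, Nat.add_sub_cancel]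
    have hbd := sq_int_add hmem1 (he (t + 1))
    -- bound on the first sqrt
    have e1 : ∫ ω, (b (t + 1) * Y t ω) ^ 2 ∂ℙ = b (t + 1) ^ 2 * ∫ ω, Y t ω ^ 2 ∂ℙ := by
      simp_rw [mul_pow]; exact MeasureTheory.integral_const_mul _ _
    have hYnn : (0:ℝ) ≤ ∫ ω, Y t ω ^ 2 ∂ℙ := integral_nonneg fun ω => sq_nonneg _
    have s1 : Real.sqrt (∫ ω, (b (t + 1) * Y t ω) ^ 2 ∂ℙ) ≤ α * (K / (1 - α)) := by
      rw [e1, Real.sqrt_mul (sq_nonneg _), Real.sqrt_sq_eq_abs]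
      have h1 : Real.sqrt (∫ ω, Y t ω ^ 2 ∂ℙ) ≤ K / (1 - α) := by
        have := Real.sqrt_le_sqrt iht.2
        rwa [Real.sqrt_sq (by positivity)] at this
      exact mul_le_mul (hb (t + 1) (by omega) ht) h1 (Real.sqrt_nonneg _)
        hα0
    have s2 : Real.sqrt (∫ ω, e (t + 1) ω ^ 2 ∂ℙ) ≤ K := by
      have := Real.sqrt_le_sqrt (heK (t + 1) (by omega) ht)
      rwa [Real.sqrt_sq hK] at this
    have hsum : α * (K / (1 - α)) + K = K / (1 - α) := by field_simp; ring
    calc ∫ ω, Y (t + 1) ω ^ 2 ∂ℙ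
        ≤ (Real.sqrt (∫ ω, (b (t + 1) * Y t ω) ^ 2 ∂ℙ)
            + Real.sqrt (∫ ω, e (t + 1) ω ^ 2 ∂ℙ)) ^ 2 := by rw [hI]; exact hbd
      _ ≤ (K / (1 - α)) ^ 2 := by
          rw [← hsum]
          exact pow_le_pow_left₀ (add_nonneg (Real.sqrt_nonneg _) (Real.sqrt_nonneg _))
            (add_le_add s1 s2) 2

set_option maxHeartbeats 1000000 in
/-- truncation bounds. Under Assumption A(ρ) with `X₀ = 0` a.s. and
symmetric innovations, the truncated process `X_{t,M}` satisfies
`E[(X_t − X_{t,M})²] ≤ (2/(1−α²))(2α√(2c)√(h(M)) + h(M))` for `M` large, where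
`c` uniformly bounds the second moments of both processes, and consequently
`E|X_t² − X_{t,M}²| ≤ C h(M)^{1/4}`. -/
theorem statement18
    {Ω : Type*} [MeasureSpace Ω] (hprob : IsProbabilityMeasure (ℙ : Measure Ω))
    (T : ℕ) (hT : 1 ≤ T) (ρ : ℝ) (hρ : 0 < ρ)
    -- Assumption A(ρ)
    (a : ℤ → ℝ → ℝ) (α : ℝ) (hα1 : α < 1)
    (hper : ∀ (t : ℤ) (v : ℝ), a (t + T) v = a t v)
    (hbdd : ∀ (t : ℤ), ∀ v ∈ Set.Icc (0:ℝ) 1, |a t v| ≤ α)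
    (hreg : ∀ t : ℤ, CHolder ρ (a t))
    -- the i.i.d. innovations, with mean 0 and variance σ² ∈ (0,∞)
    (ξ : ℕ → Ω → ℝ) (hξmeas : ∀ t, Measurable (ξ t))
    (hξindep : iIndepFun ξ ℙ)
    (hξid : ∀ t, IdentDistrib (ξ t) (ξ 0) ℙ ℙ)
    (hξmean : ∫ ω, ξ 0 ω ∂ℙ = 0)
    (σ : ℝ) (hσ : 0 < σ)
    (hξvar : ∫ ω, (ξ 0 ω) ^ 2 ∂ℙ = σ ^ 2)
    (hξsq : Integrable (fun ω => (ξ 0 ω) ^ 2) ℙ)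
    -- the process, started from X₀ = 0 almost surely
    (X : ℕ → ℕ → Ω → ℝ)
    (hXinit : ∀ n, ∀ᵐ ω ∂ℙ, X n 0 ω = 0)
    (hXrec : ∀ n t, 1 ≤ t → t ≤ n * T →
      ∀ ω, X n t ω = a (t : ℤ) ((t : ℝ) / ((n : ℝ) * T)) * X n (t - 1) ω + ξ t ω)
    -- symmetry of the innovations
    (hsym : Measure.map (ξ 0) ℙ = Measure.map (fun ω => -ξ 0 ω) ℙ)
    -- the truncated tail second moment h(M) = E[ξ₀² 1_{|ξ₀| > M}]
    (h : ℝ → ℝ)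
    (hh : ∀ M : ℝ, h M = ∫ ω, (if M < |ξ 0 ω| then (ξ 0 ω) ^ 2 else 0) ∂ℙ)
    -- the truncated process, driven by ξ_{t,M} = ξ_t 1_{|ξ_t| ≤ M}
    (XM : ℝ → ℕ → ℕ → Ω → ℝ)
    (hXM0 : ∀ M n ω, XM M n 0 ω = 0)
    (hXMrec : ∀ M : ℝ, ∀ n t : ℕ, 1 ≤ t → t ≤ n * T →
      ∀ ω, XM M n t ω = a (t : ℤ) ((t : ℝ) / ((n : ℝ) * T)) * XM M n (t - 1) ω +
        (if |ξ t ω| ≤ M then ξ t ω else 0)) :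
    ∃ c C M₀ : ℝ, 0 ≤ c ∧ 0 < C ∧ 0 < M₀ ∧
      (∀ M : ℝ, ∀ n : ℕ, 1 ≤ n → ∀ t : ℕ, t ≤ n * T →
        (∫ ω, (X n t ω) ^ 2 ∂ℙ) ≤ c ∧ (∫ ω, (XM M n t ω) ^ 2 ∂ℙ) ≤ c) ∧
      ∀ M : ℝ, M₀ ≤ M → ∀ n : ℕ, 1 ≤ n → ∀ t : ℕ, t ≤ n * T →
        (∫ ω, (X n t ω - XM M n t ω) ^ 2 ∂ℙ)
            ≤ (2 / (1 - α ^ 2)) * (2 * α * Real.sqrt (2 * c) * Real.sqrt (h M) + h M) ∧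
        (∫ ω, |(X n t ω) ^ 2 - (XM M n t ω) ^ 2| ∂ℙ) ≤ C * h M ^ ((1 : ℝ) / 4) := by
  have hα0 : 0 ≤ α := le_trans (abs_nonneg _) (hbdd 0 0 ⟨le_refl 0, zero_le_one⟩)
  have h1α : (0:ℝ) < 1 - α := by linarith
  have h1α2 : (0:ℝ) < 1 - α ^ 2 := by nlinarith
  have habs : Measurable fun x : ℝ => |x| := continuous_abs.measurable
  have hξ0L2 : MemLp (ξ 0) 2 ℙ :=
    (memLp_two_iff_integrable_sq (hξmeas 0).aestronglyMeasurable).2 hξsq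
  have hξL2 : ∀ t, MemLp (ξ t) 2 ℙ := fun t => ((hξid t).symm).memLp_snd hξ0L2
  have hξsqint : ∀ t, ∫ ω, ξ t ω ^ 2 ∂ℙ = σ ^ 2 := fun t => by
    have := ((hξid t).comp (measurable_id.pow_const 2)).integral_eq
    simpa [Function.comp, hξvar] using this
  -- measurability of the truncation maps
  have htrunc_meas : ∀ M : ℝ, Measurable fun x : ℝ => if |x| ≤ M then x else 0 := fun M =>
    Measurable.ite (measurableSet_le habs measurable_const) measurable_id measurable_const
  have htailf_meas : ∀ M : ℝ, Measurable fun x : ℝ => if |x| ≤ M then 0 else x := fun M =>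
    Measurable.ite (measurableSet_le habs measurable_const) measurable_const measurable_id
  have htailsq_meas : ∀ M : ℝ, Measurable fun x : ℝ => if M < |x| then x ^ 2 else 0 := fun M =>
    Measurable.ite (measurableSet_lt measurable_const habs)
      (measurable_id.pow_const 2) measurable_const
  -- L² bounds for the truncated innovations
  have htruncL2 : ∀ M : ℝ, ∀ t, MemLp (fun ω => if |ξ t ω| ≤ M then ξ t ω else 0) 2 ℙ := by
    intro M t
    refine MemLp.of_le (hξL2 t) ((htrunc_meas M).comp (hξmeas t)).aestronglyMeasurable
      (Eventually.of_forall fun ω => ?_)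
    by_cases hb : |ξ t ω| ≤ M <;> simp [hb, Real.norm_eq_abs]
  have htailL2 : ∀ M : ℝ, ∀ t, MemLp (fun ω => if |ξ t ω| ≤ M then 0 else ξ t ω) 2 ℙ := by
    intro M t
    refine MemLp.of_le (hξL2 t) ((htailf_meas M).comp (hξmeas t)).aestronglyMeasurable
      (Eventually.of_forall fun ω => ?_)
    by_cases hb : |ξ t ω| ≤ M <;> simp [hb, Real.norm_eq_abs]
  have htruncsq : ∀ M : ℝ, ∀ t, ∫ ω, (if |ξ t ω| ≤ M then ξ t ω else 0) ^ 2 ∂ℙ ≤ σ ^ 2 := by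
    intro M t
    have hid : ∫ ω, (if |ξ t ω| ≤ M then ξ t ω else 0) ^ 2 ∂ℙ
        = ∫ ω, (if |ξ 0 ω| ≤ M then ξ 0 ω else 0) ^ 2 ∂ℙ := by
      have := ((hξid t).comp ((htrunc_meas M).pow_const 2)).integral_eq
      simpa [Function.comp] using this
    rw [hid, ← hξvar]
    refine integral_mono (htruncL2 M 0).integrable_sq hξsq fun ω => ?_
    by_cases hb : |ξ 0 ω| ≤ M <;> simp [hb, sq_nonneg]
  have htailsq : ∀ M : ℝ, ∀ t, ∫ ω, (if |ξ t ω| ≤ M then 0 else ξ t ω) ^ 2 ∂ℙ = h M := by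
    intro M t
    have e1 : (fun ω => (if |ξ t ω| ≤ M then (0:ℝ) else ξ t ω) ^ 2)
        = fun ω => (fun x : ℝ => if M < |x| then x ^ 2 else 0) (ξ t ω) := by
      funext ω; by_cases hb : |ξ t ω| ≤ M <;> simp [hb, not_lt.2, not_le.1]
    have e0 : (fun ω => (if M < |ξ 0 ω| then (ξ 0 ω) ^ 2 else 0))
        = fun ω => (fun x : ℝ => if M < |x| then x ^ 2 else 0) (ξ 0 ω) := rfl
    rw [hh M]
    calc ∫ ω, (if |ξ t ω| ≤ M then (0:ℝ) else ξ t ω) ^ 2 ∂ℙ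
        = ∫ ω, (fun x : ℝ => if M < |x| then x ^ 2 else 0) (ξ t ω) ∂ℙ := by rw [e1]
      _ = ∫ ω, (fun x : ℝ => if M < |x| then x ^ 2 else 0) (ξ 0 ω) ∂ℙ := by
          have := ((hξid t).comp (htailsq_meas M)).integral_eq
          simpa [Function.comp] using this
      _ = _ := by rw [e0]
  have hhnn : ∀ M : ℝ, 0 ≤ h M := by
    intro M; rw [hh M]
    refine integral_nonneg fun ω => ?_
    dsimp only; split
    · exact sq_nonneg _
    · exact le_refl 0
  have htailint : ∀ M : ℝ, Integrable (fun ω => if M < |ξ 0 ω| then ξ 0 ω ^ 2 else 0) ℙ := by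
    intro M
    refine hξsq.mono' ((htailsq_meas M).comp (hξmeas 0)).aestronglyMeasurable
      (Eventually.of_forall fun ω => ?_)
    split
    · rw [Real.norm_eq_abs, abs_of_nonneg (sq_nonneg _)]
    · simp [sq_nonneg]
  have hhσ : ∀ M : ℝ, h M ≤ σ ^ 2 := by
    intro M; rw [hh M, ← hξvar]
    refine integral_mono (htailint M) hξsq fun ω => ?_
    dsimp only; split
    · exact le_refl _
    · exact sq_nonneg _
  -- choice of constants
  set c : ℝ := max ((σ / (1 - α)) ^ 2) ((3 * σ * (1 + α) / (4 * (1 - α))) ^ 2 / 2) with hcdef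
  have hc0 : 0 < c := lt_of_lt_of_le (by positivity) (le_max_left _ _)
  have hsc : 0 < Real.sqrt c := Real.sqrt_pos.2 hc0
  have hsσ' : 0 < Real.sqrt σ := Real.sqrt_pos.2 hσ
  have hC0 : 0 < 2 * Real.sqrt c * Real.sqrt σ / (1 - α) :=
    div_pos (by positivity) h1α
  -- coefficient bounds
  have hbnd : ∀ n : ℕ, 1 ≤ n → ∀ t : ℕ, 1 ≤ t → t ≤ n * T →
      |a (t : ℤ) ((t : ℝ) / ((n : ℝ) * T))| ≤ α := by
    intro n hn t h1 h2
    have hnT : (0:ℝ) < (n : ℝ) * T := by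
      have : (0:ℝ) < (n : ℝ) := by exact_mod_cast (by omega : 0 < n)
      have : (0:ℝ) < (T : ℝ) := by exact_mod_cast (by omega : 0 < T)
      positivity
    refine hbdd _ _ ⟨div_nonneg (Nat.cast_nonneg t) hnT.le, ?_⟩
    rw [div_le_one hnT]
    have : (t : ℝ) ≤ ((n * T : ℕ) : ℝ) := by exact_mod_cast h2
    simpa [Nat.cast_mul] using this
  -- the three applications of the key lemma
  have hX2 : ∀ n : ℕ, 1 ≤ n → ∀ t : ℕ, t ≤ n * T →
      MemLp (X n t) 2 ℙ ∧ ∫ ω, X n t ω ^ 2 ∂ℙ ≤ (σ / (1 - α)) ^ 2 := by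
    intro n hn
    exact key18 (b := fun t : ℕ => a (t : ℤ) ((t : ℝ) / ((n : ℝ) * T))) hα0 hα1 hσ.le
      (hXinit n) (fun t h1 h2 => hbnd n hn t h1 h2) hξL2
      (fun t _ _ => le_of_eq (hξsqint t)) (hXrec n)
  have hXM2 : ∀ M : ℝ, ∀ n : ℕ, 1 ≤ n → ∀ t : ℕ, t ≤ n * T →
      MemLp (XM M n t) 2 ℙ ∧ ∫ ω, XM M n t ω ^ 2 ∂ℙ ≤ (σ / (1 - α)) ^ 2 := by
    intro M n hn
    exact key18 (b := fun t : ℕ => a (t : ℤ) ((t : ℝ) / ((n : ℝ) * T)))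
      (e := fun t ω => if |ξ t ω| ≤ M then ξ t ω else 0) hα0 hα1 hσ.le
      (Eventually.of_forall fun ω => hXM0 M n ω)
      (fun t h1 h2 => hbnd n hn t h1 h2) (htruncL2 M)
      (fun t _ _ => htruncsq M t) (hXMrec M n)
  have hD2 : ∀ M : ℝ, ∀ n : ℕ, 1 ≤ n → ∀ t : ℕ, t ≤ n * T →
      MemLp (fun ω => X n t ω - XM M n t ω) 2 ℙ ∧
      ∫ ω, (X n t ω - XM M n t ω) ^ 2 ∂ℙ ≤ (Real.sqrt (h M) / (1 - α)) ^ 2 := by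
    intro M n hn
    refine key18 (Y := fun t ω => X n t ω - XM M n t ω)
      (b := fun t : ℕ => a (t : ℤ) ((t : ℝ) / ((n : ℝ) * T)))
      (e := fun t ω => if |ξ t ω| ≤ M then 0 else ξ t ω) hα0 hα1 (Real.sqrt_nonneg _)
      ((hXinit n).mono fun ω hω => ?_)
      (fun t h1 h2 => hbnd n hn t h1 h2) (htailL2 M)
      (fun t _ _ => le_of_eq ((htailsq M t).trans (Real.sq_sqrt (hhnn M)).symm)) ?_
    · show X n 0 ω - XM M n 0 ω = 0
      rw [hω, hXM0 M n ω, sub_zero]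
    · intro t h1 h2 ω
      show X n t ω - XM M n t ω = a (t : ℤ) ((t : ℝ) / ((n : ℝ) * T)) *
          (X n (t - 1) ω - XM M n (t - 1) ω) + (if |ξ t ω| ≤ M then 0 else ξ t ω)
      rw [hXrec n t h1 h2 ω, hXMrec M n t h1 h2 ω]
      by_cases hb : |ξ t ω| ≤ M <;> simp [hb] <;> ring
  -- final assembly
  refine ⟨c, 2 * Real.sqrt c * Real.sqrt σ / (1 - α), 1, hc0.le, hC0, one_pos, ?_, ?_⟩
  · intro M n hn t ht
    exact ⟨le_trans (hX2 n hn t ht).2 (le_max_left _ _),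
      le_trans (hXM2 M n hn t ht).2 (le_max_left _ _)⟩
  intro M _ n hn t ht
  have hD := (hD2 M n hn t ht).2
  have hDmem := (hD2 M n hn t ht).1
  have hXmem := (hX2 n hn t ht).1
  have hXMmem := (hXM2 M n hn t ht).1
  have hXle := (hX2 n hn t ht).2
  have hXMle := (hXM2 M n hn t ht).2
  set s := Real.sqrt (h M) with hsdef
  have hs0 : 0 ≤ s := Real.sqrt_nonneg _
  have hs2 : s ^ 2 = h M := Real.sq_sqrt (hhnn M)
  have hsσ : s ≤ σ := by
    have := Real.sqrt_le_sqrt (hhσ M)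
    rwa [Real.sqrt_sq hσ.le] at this
  set r := Real.sqrt (2 * c) with hrdef
  have hr0 : 0 ≤ r := Real.sqrt_nonneg _
  have hbase : 0 ≤ 3 * σ * (1 + α) / (4 * (1 - α)) := by
    apply div_nonneg _ (by linarith)
    nlinarith [mul_nonneg hσ.le hα0]
  have hrge : 3 * σ * (1 + α) ≤ 4 * (1 - α) * r := by
    have h1 : (3 * σ * (1 + α) / (4 * (1 - α))) ^ 2 / 2 ≤ c := le_max_right _ _
    have h2 : Real.sqrt ((3 * σ * (1 + α) / (4 * (1 - α))) ^ 2) ≤ r := by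
      apply Real.sqrt_le_sqrt; linarith
    rw [Real.sqrt_sq hbase] at h2
    rw [div_le_iff₀ (by linarith : (0:ℝ) < 4 * (1 - α))] at h2
    linarith [h2]
  constructor
  · -- first bound
    have hDle : ∫ ω, (X n t ω - XM M n t ω) ^ 2 ∂ℙ ≤ s ^ 2 / (1 - α) ^ 2 := by
      refine hD.trans (le_of_eq ?_); rw [div_pow]
    have hcore : s ^ 2 * (1 + α) ≤ 2 * (2 * α * r * s + s ^ 2) * (1 - α) := by
      have A := mul_le_mul_of_nonneg_left hrge (mul_nonneg hα0 hs0)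
      have B := mul_le_mul_of_nonneg_left hsσ
        (mul_nonneg (mul_nonneg hα0 (by linarith : (0:ℝ) ≤ 1 + α)) hs0)
      nlinarith [sq_nonneg s, sq_nonneg (α * s)]
    have halg : s ^ 2 / (1 - α) ^ 2 ≤ 2 / (1 - α ^ 2) * (2 * α * r * s + s ^ 2) := by
      rw [div_mul_eq_mul_div, div_le_div_iff₀ (by positivity) h1α2]
      nlinarith [mul_le_mul_of_nonneg_right hcore h1α.le]
    calc ∫ ω, (X n t ω - XM M n t ω) ^ 2 ∂ℙ ≤ s ^ 2 / (1 - α) ^ 2 := hDle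
      _ ≤ 2 / (1 - α ^ 2) * (2 * α * r * s + s ^ 2) := halg
      _ = 2 / (1 - α ^ 2) * (2 * α * r * s + h M) := by rw [hs2]
  · -- second bound
    have e2 : ∫ ω, |X n t ω ^ 2 - XM M n t ω ^ 2| ∂ℙ
        = ∫ ω, |(X n t ω - XM M n t ω) * (X n t ω + XM M n t ω)| ∂ℙ := by
      congr 1; funext ω; congr 1; ring
    have hSmem : MemLp (fun ω => X n t ω + XM M n t ω) 2 ℙ := hXmem.add hXMmem
    have hcs := cs2 hDmem hSmem
    have hsum := sq_int_add hXmem hXMmem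
    have hsqX : Real.sqrt (∫ ω, X n t ω ^ 2 ∂ℙ) ≤ Real.sqrt c :=
      Real.sqrt_le_sqrt (hXle.trans (le_max_left _ _))
    have hsqXM : Real.sqrt (∫ ω, XM M n t ω ^ 2 ∂ℙ) ≤ Real.sqrt c :=
      Real.sqrt_le_sqrt (hXMle.trans (le_max_left _ _))
    have hSle : ∫ ω, (X n t ω + XM M n t ω) ^ 2 ∂ℙ ≤ (2 * Real.sqrt c) ^ 2 := by
      refine hsum.trans ?_
      have : Real.sqrt (∫ ω, X n t ω ^ 2 ∂ℙ) + Real.sqrt (∫ ω, XM M n t ω ^ 2 ∂ℙ)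
          ≤ 2 * Real.sqrt c := by linarith
      exact pow_le_pow_left₀ (add_nonneg (Real.sqrt_nonneg _) (Real.sqrt_nonneg _)) this 2
    have hsqS : Real.sqrt (∫ ω, (X n t ω + XM M n t ω) ^ 2 ∂ℙ) ≤ 2 * Real.sqrt c := by
      have := Real.sqrt_le_sqrt hSle
      rwa [Real.sqrt_sq (by positivity)] at this
    have hsqD : Real.sqrt (∫ ω, (X n t ω - XM M n t ω) ^ 2 ∂ℙ) ≤ s / (1 - α) := by
      have := Real.sqrt_le_sqrt hD
      rwa [Real.sqrt_sq (div_nonneg hs0 h1α.le)] at this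
    have hq0 : (0:ℝ) ≤ h M ^ ((1:ℝ)/4) := Real.rpow_nonneg (hhnn M) _
    have hq : s ≤ Real.sqrt σ * h M ^ ((1:ℝ)/4) := by
      have h4 : h M ^ ((1:ℝ)/4) ≤ Real.sqrt σ := by
        have hr := Real.rpow_le_rpow (hhnn M) (hhσ M) (by norm_num : (0:ℝ) ≤ 1/4)
        have e : ((σ:ℝ) ^ 2) ^ ((1:ℝ)/4) = Real.sqrt σ := by
          rw [← Real.rpow_natCast σ 2, ← Real.rpow_mul hσ.le, Real.sqrt_eq_rpow]
          norm_num
        rwa [e] at hr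
      have h5 : s = h M ^ ((1:ℝ)/4) * h M ^ ((1:ℝ)/4) := by
        rw [hsdef, Real.sqrt_eq_rpow,
          ← Real.rpow_add' (hhnn M) (by norm_num : (1:ℝ)/4 + 1/4 ≠ 0)]
        norm_num
      calc s = h M ^ ((1:ℝ)/4) * h M ^ ((1:ℝ)/4) := h5
        _ ≤ Real.sqrt σ * h M ^ ((1:ℝ)/4) :=
          mul_le_mul_of_nonneg_right h4 hq0
    rw [e2]
    calc ∫ ω, |(X n t ω - XM M n t ω) * (X n t ω + XM M n t ω)| ∂ℙ
        ≤ Real.sqrt (∫ ω, (X n t ω - XM M n t ω) ^ 2 ∂ℙ) *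
            Real.sqrt (∫ ω, (X n t ω + XM M n t ω) ^ 2 ∂ℙ) := hcs
      _ ≤ (s / (1 - α)) * (2 * Real.sqrt c) := by
          exact mul_le_mul hsqD hsqS (Real.sqrt_nonneg _) (div_nonneg hs0 h1α.le)
      _ ≤ (Real.sqrt σ * h M ^ ((1:ℝ)/4) / (1 - α)) * (2 * Real.sqrt c) := by
          refine mul_le_mul_of_nonneg_right ?_ (by positivity)
          exact (div_le_div_iff_of_pos_right h1α).2 hq
      _ = 2 * Real.sqrt c * Real.sqrt σ / (1 - α) * h M ^ ((1:ℝ)/4) := by ring
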